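/- Let d be a squarefree integer with d ≠ 0, 1, K = ℚ(√d), p > 3 a prime, and A, B, C nonzero pth-powerfree integers with gcd(B, C) = 1. Let (x, y, z) ∈ K³ be a nontrivial solution of A x^p + B y^p + C z^p = 0 (xyz ≠ 0), and suppose Y := (−BC)^{(p−1)/2}(B y^p − C z^p)/(2 x^p) has Re(Y) = 0 (i.e., Y = n√d with n ∈ ℚ). Then BC = ±1, the element X := −BC·y·z/x² lies in ℚ, and there exists u ∈ K with N(u) = 1 such that y = u·z̄. -/

import Mathlib

open Polynomial

lemma aux_root_one {d : ℤ} {K : Type*} [Field K] [CharZero K] {s : K}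
    (hs : s ^ 2 = (d : K)) (hgen : ∀ w : K, ∃ a b : ℚ, w = (a : K) + (b : K) * s)
    {p : ℕ} (hp : p.Prime) (hp3 : 3 < p) {ζ : K} (h : ζ ^ p = 1) : ζ = 1 := by
  by_contra hne
  have hdvd : orderOf ζ ∣ p := orderOf_dvd_of_pow_eq_one h
  have hord : orderOf ζ = p := by
    rcases (Nat.Prime.eq_one_or_self_of_dvd hp _ hdvd) with h1 | h1
    · exact absurd (orderOf_eq_one_iff.mp h1) hne
    · exact h1
  have hprim : IsPrimitiveRoot ζ p := by rw [← hord]; exact IsPrimitiveRoot.orderOf ζ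
  have hmin : cyclotomic p ℚ = minpoly ℚ ζ := cyclotomic_eq_minpoly_rat hprim hp.pos
  obtain ⟨a, b, rfl⟩ := hgen ζ
  set q : ℚ[X] := C 1 * X ^ 2 + C (-(2 * a)) * X + C (a ^ 2 - d * b ^ 2) with hq
  have hq0 : q ≠ 0 := by
    intro h0
    have := natDegree_quadratic (a := (1:ℚ)) (b := -(2*a)) (c := a ^ 2 - d * b ^ 2) one_ne_zero
    rw [← hq, h0] at this
    simp at this
  have halg : ∀ r : ℚ, algebraMap ℚ K r = (r : K) := fun r => rfl
  have haev : aeval ((a : K) + (b : K) * s) q = 0 := by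
    simp only [hq, map_add, map_mul, map_pow, aeval_X, aeval_C, map_one, one_mul, halg]
    push_cast
    linear_combination ((b:K)^2) * hs
  have hdeg := minpoly.degree_le_of_ne_zero ℚ ((a : K) + (b : K) * s) hq0 haev
  rw [← hmin] at hdeg
  have hdq : q.natDegree = 2 := natDegree_quadratic one_ne_zero
  have h1 : (cyclotomic p ℚ).natDegree ≤ q.natDegree := natDegree_le_natDegree hdeg
  rw [natDegree_cyclotomic, Nat.totient_prime hp, hdq] at h1
  omega

lemma aux_fix_rat {d : ℤ} (hd0 : d ≠ 0) {K : Type*} [Field K] [CharZero K] {s : K}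
    (hs : s ^ 2 = (d : K)) (hgen : ∀ w : K, ∃ a b : ℚ, w = (a : K) + (b : K) * s)
    {σ : K ≃+* K} (hσ : σ s = -s) {w : K} (hw : σ w = w) : ∃ q : ℚ, w = (q : K) := by
  have hs0 : s ≠ 0 := by
    intro h0
    rw [h0] at hs
    have : ((0:ℤ) : K) = (d : K) := by simpa using hs
    exact hd0 (by exact_mod_cast this.symm)
  obtain ⟨a, b, rfl⟩ := hgen w
  have : σ ((a:K) + (b:K)*s) = (a:K) - (b:K)*s := by
    rw [map_add, map_mul, hσ, map_ratCast, map_ratCast]; ring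
  rw [this] at hw
  have hb : (b : K) = 0 := by
    have h2 : (2:K) * (b:K) * s = 0 := by linear_combination -hw
    rcases mul_eq_zero.mp h2 with h3 | h3
    · rcases mul_eq_zero.mp h3 with h4 | h4
      · exact absurd h4 two_ne_zero
      · exact h4
    · exact absurd h3 hs0
  exact ⟨a, by rw [hb]; ring⟩

lemma aux_pow_rat {d : ℤ} (hd0 : d ≠ 0) {K : Type*} [Field K] [CharZero K] {s : K}
    (hs : s ^ 2 = (d : K)) (hgen : ∀ w : K, ∃ a b : ℚ, w = (a : K) + (b : K) * s)
    {σ : K ≃+* K} (hσ : σ s = -s)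
    {p : ℕ} (hp : p.Prime) (hp3 : 3 < p) {w : K} {q : ℚ} (hw : w ^ p = (q : K)) :
    ∃ t : ℚ, w = (t : K) := by
  rcases eq_or_ne w 0 with rfl | hw0
  · exact ⟨0, by simp⟩
  · have hσw : (σ w) ^ p = (q : K) := by rw [← map_pow, hw, map_ratCast]
    have hζ : (σ w / w) ^ p = 1 := by
      have hq0 : (q : K) ≠ 0 := by
        rw [← hw]
        exact pow_ne_zero _ hw0
      rw [div_pow, hσw, hw, div_self hq0]
    have := aux_root_one hs hgen hp hp3 hζ
    have hfix : σ w = w := by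
      field_simp at this
      exact this
    exact aux_fix_rat hd0 hs hgen hσ hfix

lemma aux_int {p : ℕ} (hp : p.Prime) (hp3 : 3 < p) {B C : ℤ} (hB : B ≠ 0) (hC : C ≠ 0)
    (hBpf : ∀ q : ℤ, Prime q → ¬ q ^ p ∣ B) (hCpf : ∀ q : ℤ, Prime q → ¬ q ^ p ∣ C)
    (hBCcop : IsCoprime B C) {t : ℚ} (ht : (B : ℚ) * t ^ p = (C : ℚ)) :
    ∃ m : ℤ, (m = 1 ∨ m = -1) ∧ t = (m : ℚ) ∧ B * C = m := by
  have hoddp : Odd p := hp.odd_of_ne_two (by omega)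
  have ht0 : t ≠ 0 := by
    rintro rfl
    rw [zero_pow hp.ne_zero, mul_zero] at ht
    exact hC (by exact_mod_cast ht.symm)
  have hden0 : ((t.den : ℚ)) ≠ 0 := Nat.cast_ne_zero.mpr t.den_nz
  have hkey : B * t.num ^ p = C * (t.den : ℤ) ^ p := by
    have h1 : (B : ℚ) * ((t.num : ℚ) / (t.den : ℚ)) ^ p = (C : ℚ) := by
      rw [Rat.num_div_den t]; exact ht
    have h2 : (B : ℚ) * (t.num : ℚ) ^ p = (C : ℚ) * (t.den : ℚ) ^ p := by
      field_simp at h1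
      have hinv : (t.den : ℚ) ^ p * ((t.den : ℚ)⁻¹) ^ p = 1 := by
        rw [← mul_pow, mul_inv_cancel₀ hden0, one_pow]
      linear_combination (t.den : ℚ) ^ p * h1 - (B : ℚ) * (t.num : ℚ) ^ p * hinv
    exact_mod_cast h2
  have hco : IsCoprime ((t.den : ℤ)) t.num := by
    rw [Int.isCoprime_iff_gcd_eq_one]
    simpa [Int.gcd, Nat.coprime_comm] using t.reduced
  have hdvdB : ((t.den : ℤ)) ^ p ∣ B := by
    refine (hco.pow (n := p) (m := p)).dvd_of_dvd_mul_right ⟨C, ?_⟩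
    linear_combination hkey
  have hden1 : t.den = 1 := by
    by_contra hd1
    obtain ⟨q, hq, hqd⟩ := Nat.exists_prime_and_dvd hd1
    refine hBpf (q : ℤ) (Int.prime_iff_natAbs_prime.mpr (by simpa using hq)) (dvd_trans ?_ hdvdB)
    exact pow_dvd_pow_of_dvd (Int.natCast_dvd_natCast.mpr hqd) p
  have hkey2 : B * t.num ^ p = C := by
    rw [hden1] at hkey; simpa using hkey
  have hnum0 : t.num ≠ 0 := Rat.num_ne_zero.mpr ht0
  have hnum1 : t.num.natAbs = 1 := by
    by_contra hn1
    obtain ⟨q, hq, hqd⟩ := Nat.exists_prime_and_dvd hn1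
    refine hCpf (q : ℤ) (Int.prime_iff_natAbs_prime.mpr (by simpa using hq)) ?_
    have h3 : (q : ℤ) ∣ t.num := Int.dvd_natAbs.mp (Int.natCast_dvd_natCast.mpr hqd)

    have h4 : (q : ℤ) ^ p ∣ t.num ^ p := pow_dvd_pow_of_dvd h3 p
    exact h4.trans ⟨B, by linear_combination -hkey2⟩
  have hm : t.num = 1 ∨ t.num = -1 := Int.natAbs_eq_iff.mp hnum1 |>.imp id id
  have hmp : t.num ^ p = t.num := by
    rcases hm with h | h <;> rw [h] <;> simp [hoddp.neg_one_pow]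
  have hCeq : C = B * t.num := by rw [← hkey2, hmp]
  have hBunit : IsUnit B := hBCcop.isUnit_of_dvd' dvd_rfl ⟨t.num, hCeq⟩
  have hBpm : B = 1 ∨ B = -1 := Int.isUnit_iff.mp hBunit
  refine ⟨t.num, hm, ?_, ?_⟩
  · conv_lhs => rw [← Rat.num_div_den t]
    rw [hden1]; simp
  · rcases hBpm with h | h <;> rw [hCeq, h] <;> ring



/-- Let `d` be a squarefree integer with `d ≠ 0, 1`, `K = ℚ(√d)`, `p > 3` a prime, and
`A, B, C` nonzero `p`th-powerfree integers with `gcd(B, C) = 1`.  Let `(x, y, z) ∈ K³` be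
a nontrivial solution of `A x^p + B y^p + C z^p = 0` (`xyz ≠ 0`), and suppose
`Y := (−BC)^((p−1)/2)(B y^p − C z^p)/(2 x^p)` has `Re(Y) = 0`, i.e. `Y = n√d` with
`n ∈ ℚ`.  Then `BC = ±1`, the element `X := −BC·y·z/x²` lies in `ℚ`, and there exists
`u ∈ K` with `N(u) = 1` such that `y = u·z̄`.  Here `K` is realized as a field of
characteristic zero generated over `ℚ` by a square root `s` of `d`, conjugation is the
ring automorphism `σ` of `K` with `σ(√d) = −√d`, and `N(u) = u·σ(u)`. -/
theorem stmt_16 (d : ℤ) (hd : Squarefree d) (hd0 : d ≠ 0) (hd1 : d ≠ 1)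
    (K : Type*) [Field K] [CharZero K] (s : K) (hs : s ^ 2 = (d : K))
    (hgen : ∀ w : K, ∃ a b : ℚ, w = (a : K) + (b : K) * s)
    (σ : K ≃+* K) (hσ : σ s = -s)
    (p : ℕ) (hp : p.Prime) (hp3 : 3 < p)
    (A B C : ℤ) (hA : A ≠ 0) (hB : B ≠ 0) (hC : C ≠ 0)
    (hApf : ∀ q : ℤ, Prime q → ¬ q ^ p ∣ A)
    (hBpf : ∀ q : ℤ, Prime q → ¬ q ^ p ∣ B)
    (hCpf : ∀ q : ℤ, Prime q → ¬ q ^ p ∣ C)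
    (hBCcop : IsCoprime B C)
    (x y z : K) (heq : (A : K) * x ^ p + (B : K) * y ^ p + (C : K) * z ^ p = 0)
    (hxyz : x * y * z ≠ 0)
    (n : ℚ)
    (hY : (((-(B * C)) ^ ((p - 1) / 2) : ℤ) : K) * ((B : K) * y ^ p - (C : K) * z ^ p)
        / (2 * x ^ p) = (n : K) * s) :
    (B * C = 1 ∨ B * C = -1)
      ∧ (∃ q : ℚ, ((-(B * C) : ℤ) : K) * y * z / x ^ 2 = (q : K))
      ∧ ∃ u : K, u * σ u = 1 ∧ y = u * σ z := by
  have hx : x ≠ 0 := fun h => hxyz (by simp [h])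
  have hy : y ≠ 0 := fun h => hxyz (by simp [h])
  have hz : z ≠ 0 := fun h => hxyz (by simp [h])
  have hσ0 : ∀ w : K, σ w = 0 → w = 0 := fun w h => σ.injective (by simpa using h)
  have hsx : σ x ≠ 0 := fun h => hx (hσ0 x h)
  have hsz : σ z ≠ 0 := fun h => hz (hσ0 z h)
  have hσσ : ∀ w : K, σ (σ w) = w := by
    intro w; obtain ⟨a, b, rfl⟩ := hgen w
    simp [map_add, map_mul, map_ratCast, hσ]
  have hBK : (B : K) ≠ 0 := Int.cast_ne_zero.mpr hB
  have heK : (((-(B * C)) ^ ((p - 1) / 2) : ℤ) : K) ≠ 0 := by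
    rw [Int.cast_ne_zero]
    exact pow_ne_zero _ (neg_ne_zero.mpr (mul_ne_zero hB hC))
  have hxp : x ^ p ≠ 0 := pow_ne_zero _ hx
  have h2xp : (2 : K) * x ^ p ≠ 0 := mul_ne_zero two_ne_zero hxp
  rw [div_eq_iff h2xp] at hY
  have E1 : (B : K) * y ^ p + (C : K) * z ^ p = -(A : K) * x ^ p := by linear_combination heq
  have E2 : (B : K) * (σ y) ^ p + (C : K) * (σ z) ^ p = -(A : K) * (σ x) ^ p := by
    have h := congrArg σ E1
    simpa only [map_add, map_mul, map_pow, map_intCast, map_neg] using h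
  have E4 : (((-(B * C)) ^ ((p - 1) / 2) : ℤ) : K) * ((B : K) * (σ y) ^ p - (C : K) * (σ z) ^ p)
      = (n : K) * (-s) * (2 * (σ x) ^ p) := by
    have h := congrArg σ hY
    simpa only [map_mul, map_sub, map_pow, map_intCast, map_ratCast, hσ, map_ofNat] using h
  have D2 : ((B : K) * y ^ p - (C : K) * z ^ p) * (σ x) ^ p
      + ((B : K) * (σ y) ^ p - (C : K) * (σ z) ^ p) * x ^ p = 0 := by
    refine mul_left_cancel₀ heK ?_
    rw [mul_zero]
    linear_combination (σ x) ^ p * hY + x ^ p * E4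
  have E5 : (B : K) * y ^ p * (σ x) ^ p = (C : K) * (σ z) ^ p * x ^ p := by
    linear_combination ((σ x) ^ p / 2) * E1 - (x ^ p / 2) * E2 + (1 / 2 : K) * D2
  have hxz0 : x * σ z ≠ 0 := mul_ne_zero hx hsz
  have hE5' : (y * σ x) ^ p * (B : K) = (x * σ z) ^ p * (C : K) := by
    rw [mul_pow, mul_pow]; linear_combination E5
  have hwp : ((y * σ x) / (x * σ z)) ^ p = (((C : ℚ) / (B : ℚ) : ℚ) : K) := by
    rw [Rat.cast_div, Rat.cast_intCast, Rat.cast_intCast, div_pow,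
      div_eq_div_iff (pow_ne_zero _ hxz0) hBK]
    linear_combination hE5'
  obtain ⟨t, hwt⟩ := aux_pow_rat hd0 hs hgen hσ hp hp3 hwp
  have htp : (B : ℚ) * t ^ p = (C : ℚ) := by
    have h1 : ((t ^ p : ℚ) : K) = (((C : ℚ) / (B : ℚ) : ℚ) : K) := by
      push_cast
      rw [← hwt]
      rw [hwp]
      push_cast
      ring
    have h2 : (t ^ p : ℚ) = (C : ℚ) / (B : ℚ) := Rat.cast_injective h1
    have hBQ : (B : ℚ) ≠ 0 := Int.cast_ne_zero.mpr hB
    rw [h2, mul_div_cancel₀ _ hBQ]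
  obtain ⟨m, hm, htm, hBCm⟩ := aux_int hp hp3 hB hC hBpf hCpf hBCcop htp
  have KE : y * σ x = (t : K) * (x * σ z) := by
    rw [div_eq_iff hxz0] at hwt
    exact hwt
  have KE' : σ y * x = (t : K) * (σ x * z) := by
    have h := congrArg σ KE
    simpa only [map_mul, map_ratCast, hσσ] using h
  have ht2 : (t : K) ^ 2 = 1 := by
    rw [htm]
    rcases hm with h | h <;> rw [h] <;> norm_num
  refine ⟨?_, ?_, ?_⟩
  · rcases hm with h | h
    · left; rw [hBCm, h]
    · right; rw [hBCm, h]
  · have hfix : σ (((-(B * C) : ℤ) : K) * y * z / x ^ 2)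
        = ((-(B * C) : ℤ) : K) * y * z / x ^ 2 := by
      rw [map_div₀, map_mul, map_mul, map_pow, map_intCast,
        div_eq_div_iff (pow_ne_zero 2 hsx) (pow_ne_zero 2 hx)]
      linear_combination ((((-(B * C) : ℤ) : K)) * σ z * x) * KE'
        - ((((-(B * C) : ℤ) : K)) * z * σ x) * KE
    exact aux_fix_rat hd0 hs hgen hσ hfix
  · refine ⟨(t : K) * x / σ x, ?_, ?_⟩
    · rw [map_div₀, map_mul, map_ratCast, hσσ, div_mul_div_comm,
        div_eq_one_iff_eq (mul_ne_zero hsx hx)]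
      linear_combination (x * σ x) * ht2
    · rw [div_mul_eq_mul_div, eq_div_iff hsx]
      linear_combination KE
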